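/- Let $\{\omega_j\}$ be weights with $\omega_0 > 0$, $\omega_j \le 0$ for $j \ge 1$, and $\sum_{j=0}^n \omega_j \ge 0$ for all $n \ge 1$. Let $f : \mathbb{R}^d \to \mathbb{R}^d$ satisfy $\langle f(x)-f(y), x-y\rangle \le \lambda\|x-y\|^2$ with $\lambda \le 0$, and suppose $(x_n)$, $(y_n)$ satisfy the implicit scheme $\sum_{j=0}^n \omega_{n-j} x_j = h^\alpha f(x_n)$, $\sum_{j=0}^n \omega_{n-j} y_j = h^\alpha f(y_n)$ for all $n \ge 1$, $h^\alpha > 0$. Then the sequence $(\|x_n - y_n\|)_{n \ge 0}$ satisfies $\|x_n - y_n\| \le \max_{0 \le j \le n-1} \|x_j - y_j\|$ for all $n \ge 1$; in particular $\|x_n - y_n\| \le \|x_0 - y_0\|$ for all $n$. -/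

import Mathlib

theorem fbdf_numerical_contractivity {d : ℕ}
    (ω : ℕ → ℝ) (hω0 : 0 < ω 0) (hωneg : ∀ j, 1 ≤ j → ω j ≤ 0)
    (hsum : ∀ n : ℕ, 1 ≤ n → 0 ≤ ∑ j ∈ Finset.range (n + 1), ω j)
    (f : EuclideanSpace ℝ (Fin d) → EuclideanSpace ℝ (Fin d)) (lam : ℝ) (hlam : lam ≤ 0)
    (hf : ∀ x y, (inner ℝ (f x - f y) (x - y) : ℝ) ≤ lam * ‖x - y‖ ^ 2)
    (hα : ℝ) (hhα : 0 < hα)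
    (x y : ℕ → EuclideanSpace ℝ (Fin d))
    (hx : ∀ n : ℕ, 1 ≤ n → ∑ j ∈ Finset.range (n + 1), ω (n - j) • x j = hα • f (x n))
    (hy : ∀ n : ℕ, 1 ≤ n → ∑ j ∈ Finset.range (n + 1), ω (n - j) • y j = hα • f (y n)) :
    (∀ n : ℕ, ∀ hn : 1 ≤ n,
      ‖x n - y n‖ ≤ (Finset.range n).sup' (Finset.nonempty_range_iff.mpr (by omega))
        (fun j => ‖x j - y j‖)) ∧
    (∀ n : ℕ, ‖x n - y n‖ ≤ ‖x 0 - y 0‖) := by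
  have key : ∀ n : ℕ, ∀ hn : 1 ≤ n,
      ‖x n - y n‖ ≤ (Finset.range n).sup' (Finset.nonempty_range_iff.mpr (by omega))
        (fun j => ‖x j - y j‖) := by
    intro n hn
    have hne : (Finset.range n).Nonempty := Finset.nonempty_range_iff.mpr (by omega)
    set M := (Finset.range n).sup' hne (fun j => ‖x j - y j‖) with hMdef
    have hM0 : 0 ≤ M :=
      le_trans (norm_nonneg (x 0 - y 0)) (Finset.le_sup' (fun j => ‖x j - y j‖) (Finset.mem_range.mpr hn))
    have hMj : ∀ j ∈ Finset.range n, ‖x j - y j‖ ≤ M := fun j hj => Finset.le_sup' (fun j => ‖x j - y j‖) hj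
    have hzscheme : ∑ j ∈ Finset.range (n+1), ω (n - j) • (x j - y j)
        = hα • (f (x n) - f (y n)) := by
      simp only [smul_sub, Finset.sum_sub_distrib]
      rw [hx n hn, hy n hn]
    have hinner : (inner ℝ (∑ j ∈ Finset.range (n+1), ω (n - j) • (x j - y j)) (x n - y n) : ℝ) ≤ 0 := by
      rw [hzscheme, real_inner_smul_left]
      have h1 := hf (x n) (y n)
      have h2 : (inner ℝ (f (x n) - f (y n)) (x n - y n) : ℝ) ≤ 0 := by
        nlinarith [sq_nonneg ‖x n - y n‖]
      have h3 := mul_le_mul_of_nonneg_left h2 hhα.le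
      simpa using h3
    have hsplit : (inner ℝ (∑ j ∈ Finset.range (n+1), ω (n - j) • (x j - y j)) (x n - y n) : ℝ)
        = (∑ j ∈ Finset.range n, ω (n - j) * inner ℝ (x j - y j) (x n - y n))
          + ω 0 * ‖x n - y n‖^2 := by
      rw [sum_inner, Finset.sum_range_succ, Nat.sub_self]
      congr 1
      · exact Finset.sum_congr rfl fun j hj => real_inner_smul_left _ _ _
      · rw [real_inner_smul_left, real_inner_self_eq_norm_sq]
    have hS : ∑ j ∈ Finset.range n, ω (n - j) = (∑ k ∈ Finset.range (n+1), ω k) - ω 0 := by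
      have h1 : ∑ j ∈ Finset.range n, ω (n - j) = ∑ j ∈ Finset.range n, ω (j + 1) := by
        rw [← Finset.sum_range_reflect (fun i => ω (i + 1)) n]
        apply Finset.sum_congr rfl
        intro j hj
        have := Finset.mem_range.mp hj
        congr 1
        omega
      rw [h1, Finset.sum_range_succ' ω n]
      ring
    have hSle : -(∑ j ∈ Finset.range n, ω (n - j)) ≤ ω 0 := by
      have := hsum n hn
      rw [hS]; linarith
    have hterm : ∀ j ∈ Finset.range n,
        ω (n - j) * (M * ‖x n - y n‖) ≤ ω (n - j) * inner ℝ (x j - y j) (x n - y n) := by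
      intro j hj
      have hj' := Finset.mem_range.mp hj
      have hneg : ω (n - j) ≤ 0 := hωneg _ (by omega)
      have hip : (inner ℝ (x j - y j) (x n - y n) : ℝ) ≤ M * ‖x n - y n‖ := by
        calc (inner ℝ (x j - y j) (x n - y n) : ℝ) ≤ ‖x j - y j‖ * ‖x n - y n‖ :=
              real_inner_le_norm _ _
          _ ≤ M * ‖x n - y n‖ := by
              apply mul_le_mul_of_nonneg_right (hMj j hj) (norm_nonneg _)
      nlinarith
    have hsum2 : (∑ j ∈ Finset.range n, ω (n - j)) * (M * ‖x n - y n‖)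
        ≤ ∑ j ∈ Finset.range n, ω (n - j) * inner ℝ (x j - y j) (x n - y n) := by
      rw [Finset.sum_mul]
      exact Finset.sum_le_sum hterm
    have hMn : 0 ≤ M * ‖x n - y n‖ := mul_nonneg hM0 (norm_nonneg _)
    have hfinal : ω 0 * ‖x n - y n‖^2 ≤ ω 0 * (M * ‖x n - y n‖) := by
      have h2 : ω 0 * ‖x n - y n‖^2
          ≤ -((∑ j ∈ Finset.range n, ω (n - j)) * (M * ‖x n - y n‖)) := by
        rw [hsplit] at hinner
        linarith
      have h3 : -((∑ j ∈ Finset.range n, ω (n - j)) * (M * ‖x n - y n‖))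
          ≤ ω 0 * (M * ‖x n - y n‖) := by
        have := mul_le_mul_of_nonneg_right hSle hMn
        linarith
      linarith
    have h2 : ‖x n - y n‖ ^ 2 ≤ M * ‖x n - y n‖ := le_of_mul_le_mul_left hfinal hω0
    rcases (norm_nonneg (x n - y n)).eq_or_lt with h | h
    · rw [← h]; exact hM0
    · exact le_of_mul_le_mul_right (by nlinarith [h2]) h
  refine ⟨key, ?_⟩
  intro n
  induction n using Nat.strong_induction_on with
  | _ n ih =>
    match n with
    | 0 => exact le_refl _
    | (m+1) =>
      refine (key (m+1) (by omega)).trans (Finset.sup'_le _ _ fun j hj => ?_)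
      exact ih j (by simpa using Finset.mem_range.mp hj)
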